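/- Let Θ be a measurable parameter space with prior probability measure β, X a set with pseudo-metric ρ, and for each θ ∈ Θ a density p_θ : X → ℝ≥0. Suppose that for some c > 0, β({θ : d(p_θ(x), p_θ(y)) ≤ L·ρ(x,y) for all x, y ∈ X}) ≥ 1 − e^{−cL} for all L ≥ 0 (where d is the absolute log-ratio distance). Fix n ∈ ℕ and define the product density p_θ^n(x_1,…,x_n) = Π_{i=1}^n p_θ(x_i) on X^n and the pseudo-metric ρ^n((x_i),(y_i)) = Σ_{i=1}^n ρ(x_i, y_i). Then β({θ : d(p_θ^n(x), p_θ^n(y)) ≤ L·ρ^n(x,y) for all x, y ∈ X^n}) ≥ 1 − e^{−(c/n)L} for all L ≥ 0; i.e., the product family satisfies the same concentration assumption with constant c/n under ρ^n. -/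

import Mathlib

open MeasureTheory

/-- The absolute log-ratio distance on `ℝ≥0` (represented as nonnegative reals). -/
noncomputable def lrdist (a b : ℝ) : ℝ :=
  if a = 0 ∧ b = 0 then 0 else |Real.log (a / b)|

lemma lrdist_nonneg (a b : ℝ) : 0 ≤ lrdist a b := by
  unfold lrdist; split <;> positivity

lemma lrdist_zero_left (b : ℝ) : lrdist 0 b = 0 := by
  unfold lrdist; split
  · rfl
  · simp

lemma lrdist_zero_right (a : ℝ) : lrdist a 0 = 0 := by
  unfold lrdist; split
  · rfl
  · simp

lemma lrdist_prod_le {n : ℕ} (a b : Fin n → ℝ) :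
    lrdist (∏ i, a i) (∏ i, b i) ≤ ∑ i, lrdist (a i) (b i) := by
  by_cases ha : ∏ i, a i = 0
  · rw [ha, lrdist_zero_left]
    exact Finset.sum_nonneg fun i _ => lrdist_nonneg _ _
  by_cases hb : ∏ i, b i = 0
  · rw [hb, lrdist_zero_right]
    exact Finset.sum_nonneg fun i _ => lrdist_nonneg _ _
  have ha' : ∀ i ∈ Finset.univ, a i ≠ 0 := fun i _ => by
    intro h; exact ha (Finset.prod_eq_zero (Finset.mem_univ i) h)
  have hb' : ∀ i ∈ Finset.univ, b i ≠ 0 := fun i _ => by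
    intro h; exact hb (Finset.prod_eq_zero (Finset.mem_univ i) h)
  have hL : lrdist (∏ i, a i) (∏ i, b i) = |∑ i, (Real.log (a i) - Real.log (b i))| := by
    unfold lrdist
    rw [if_neg (by tauto), Real.log_div ha hb, Real.log_prod ha', Real.log_prod hb',
      Finset.sum_sub_distrib]
  rw [hL]
  refine (Finset.abs_sum_le_sum_abs _ _).trans (Finset.sum_le_sum fun i _ => ?_)
  unfold lrdist
  rw [if_neg (by push_neg; intro h; exact absurd h (ha' i (Finset.mem_univ i))),
    Real.log_div (ha' i (Finset.mem_univ i)) (hb' i (Finset.mem_univ i))]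

/-- if the prior `β` satisfies Assumption 2 with constant `c` for the
single-observation family (the prior mass of the set of `L`-Lipschitz parameters is at
least `1 - e^{-cL}` for all `L ≥ 0`), then the product family
`p_θ^n(x) = Π_i p_θ(x_i)` satisfies Assumption 2 with constant `c/n` with respect to the
pseudo-metric `ρ^n(x,y) = Σ_i ρ(x_i,y_i)`. -/
theorem product_density_concentration
    {Θ X : Type*} [MeasurableSpace Θ] [PseudoMetricSpace X]
    (β : Measure Θ) [IsProbabilityMeasure β]
    (p : Θ → X → ℝ)
    (hp_nonneg : ∀ θ x, 0 ≤ p θ x)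
    (c : ℝ) (hc : 0 < c)
    (hconc : ∀ L : ℝ, 0 ≤ L →
      ENNReal.ofReal (1 - Real.exp (-(c * L))) ≤
        β {θ : Θ | ∀ x y : X, lrdist (p θ x) (p θ y) ≤ L * dist x y})
    (n : ℕ) :
    ∀ L : ℝ, 0 ≤ L →
      ENNReal.ofReal (1 - Real.exp (-(c / n * L))) ≤
        β {θ : Θ | ∀ x y : Fin n → X,
          lrdist (∏ i, p θ (x i)) (∏ i, p θ (y i)) ≤ L * ∑ i, dist (x i) (y i)} := by
  intro L hL
  have hsub : {θ : Θ | ∀ x y : X, lrdist (p θ x) (p θ y) ≤ L * dist x y} ⊆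
      {θ : Θ | ∀ x y : Fin n → X,
        lrdist (∏ i, p θ (x i)) (∏ i, p θ (y i)) ≤ L * ∑ i, dist (x i) (y i)} := by
    intro θ hθ x y
    calc lrdist (∏ i, p θ (x i)) (∏ i, p θ (y i))
        ≤ ∑ i, lrdist (p θ (x i)) (p θ (y i)) := lrdist_prod_le _ _
      _ ≤ ∑ i, L * dist (x i) (y i) := Finset.sum_le_sum fun i _ => hθ (x i) (y i)
      _ = L * ∑ i, dist (x i) (y i) := (Finset.mul_sum _ _ _).symm
  refine le_trans ?_ ((hconc L hL).trans (measure_mono hsub))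
  apply ENNReal.ofReal_le_ofReal
  have : Real.exp (-(c * L)) ≤ Real.exp (-(c / n * L)) := by
    apply Real.exp_le_exp.mpr
    rcases Nat.eq_zero_or_pos n with h0 | hpos
    · subst h0; simp; positivity
    · have hn1 : (1 : ℝ) ≤ n := by exact_mod_cast hpos
      have : c / n ≤ c := by
        rw [div_le_iff₀ (by linarith)]
        nlinarith
      nlinarith
  linarith
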